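/- Let α ∈ (0,1) be irrational with best approximation denominators q_n and ω(θ, m) = Σ_{i=1}^m z_i(θ) where z_i(θ) = ±1 according to whether {θ + iα} ∈ [0,1/2) or [1/2,1). If ω(0, q_n) = 1, then for every θ ∈ [0,1), ω(θ, q_n) ∈ {1, -1, 3, -3}. -/

import Mathlib

/-- The ±1 coding of the rotation orbit: `1` if `{θ + iα} ∈ [0,1/2)`, `-1` otherwise. -/
noncomputable def zCode (α θ : ℝ) (i : ℕ) : ℤ :=
  if Int.fract (θ + i * α) < 1 / 2 then 1 else -1

/-- The deterministic walk `ω(θ, m) = Σ_{i=1}^m z_i(θ)`. -/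
noncomputable def walk (α θ : ℝ) (m : ℕ) : ℤ :=
  ∑ i ∈ Finset.Icc 1 m, zCode α θ i

open Finset in
lemma walk_eq_card (α θ : ℝ) (m : ℕ) :
    walk α θ m =
      2 * (((Finset.Icc 1 m).filter
        (fun i : ℕ => Int.fract (θ + i * α) < 1 / 2)).card : ℤ) - m := by
  unfold walk zCode
  have h : ∀ i ∈ Finset.Icc 1 m,
      (if Int.fract (θ + i * α) < 1 / 2 then (1 : ℤ) else -1) =
      2 * (if Int.fract (θ + i * α) < 1 / 2 then (1 : ℤ) else 0) - 1 := by
    intro i _; split <;> ring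
  rw [Finset.sum_congr rfl h, Finset.sum_sub_distrib, ← Finset.mul_sum, Finset.sum_boole,
    Finset.sum_const, Nat.card_Icc]
  simp

/-- Core Denjoy–Koksma-style counting lemma: if `q` points `y i` (indexed injectively by
`ℓ i < q`) satisfy `y i ∈ [φ + ℓ i / q, φ + (ℓ i + 1)/q]` with `0 ≤ φ < 1/q`, then the number
of them whose fractional part lies in `[0, 1/2)` is within 2 of `q/2`. -/
lemma core_count (q : ℕ) (hq : 1 ≤ q) (φ : ℝ) (hφ0 : 0 ≤ φ) (hφ1 : φ < 1 / q)
    (T : Finset ℕ) (hT : T.card = q) (ℓ : ℕ → ℕ) (hinj : Set.InjOn ℓ T)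
    (hlt : ∀ i ∈ T, ℓ i < q)
    (y : ℕ → ℝ) (hy1 : ∀ i ∈ T, φ + ℓ i / q ≤ y i)
    (hy2 : ∀ i ∈ T, y i ≤ φ + (ℓ i + 1) / q) :
    -4 ≤ 2 * ((T.filter (fun i => Int.fract (y i) < 1 / 2)).card : ℤ) - q ∧
      2 * ((T.filter (fun i => Int.fract (y i) < 1 / 2)).card : ℤ) - q ≤ 4 := by
  have hq0 : (0 : ℝ) < q := by exact_mod_cast hq
  by_cases hq4 : q ≤ 4
  · have h1 : (T.filter (fun i => Int.fract (y i) < 1 / 2)).card ≤ q := by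
      rw [← hT]; exact Finset.card_filter_le _ _
    omega
  push_neg at hq4
  -- image of ℓ is all of `range q`
  have himg : T.image ℓ = Finset.range q := by
    apply Finset.eq_of_subset_of_card_le
    · intro j hj
      obtain ⟨i, hi, rfl⟩ := Finset.mem_image.mp hj
      exact Finset.mem_range.mpr (hlt i hi)
    · rw [Finset.card_range, Finset.card_image_of_injOn hinj, hT]
  have key_card : ∀ p : ℕ → Prop, ∀ _ : DecidablePred p,
      (T.filter (fun i => p (ℓ i))).card = ((Finset.range q).filter p).card := by
    intro p hp
    rw [← himg, Finset.filter_image]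
    rw [Finset.card_image_of_injOn (hinj.mono (by exact_mod_cast Finset.filter_subset _ T))]
  -- the "definitely counted" set
  have hsubA : T.filter (fun i => 2 * ℓ i + 4 ≤ q) ⊆
      T.filter (fun i => Int.fract (y i) < 1 / 2) := by
    intro i hi
    obtain ⟨hiT, hA⟩ := Finset.mem_filter.mp hi
    have hj := hlt i hiT
    have h1 : (0 : ℝ) ≤ y i := le_trans (by positivity) (hy1 i hiT)
    have h2 : y i < 1 / 2 := by
      have hA' : (2 : ℝ) * (ℓ i + 2) ≤ q := by exact_mod_cast hA
      have key : ((ℓ i : ℝ) + 2) / q ≤ 1 / 2 := by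
        rw [div_le_div_iff₀ hq0 (by norm_num)]; linarith
      have hsum : 1 / (q : ℝ) + ((ℓ i : ℝ) + 1) / q = ((ℓ i : ℝ) + 2) / q := by ring
      linarith [hy2 i hiT]
    rw [Finset.mem_filter]
    exact ⟨hiT, by rw [Int.fract_eq_self.mpr ⟨h1, by linarith⟩]; linarith⟩
  -- the "definitely not counted" set
  have hsubB : T.filter (fun i => q ≤ 2 * ℓ i ∧ ℓ i + 2 ≤ q) ⊆
      T.filter (fun i => ¬ Int.fract (y i) < 1 / 2) := by
    intro i hi
    obtain ⟨hiT, hB1, hB2⟩ := Finset.mem_filter.mp hi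
    have h1 : (1 : ℝ) / 2 ≤ y i := by
      have hB1' : (q : ℝ) ≤ 2 * ℓ i := by exact_mod_cast hB1
      have key : (1 : ℝ) / 2 ≤ (ℓ i : ℝ) / q := by
        rw [div_le_div_iff₀ (by norm_num) hq0]; linarith
      linarith [hy1 i hiT]
    have h2 : y i < 1 := by
      have hc : ((ℓ i : ℝ) + 2) ≤ q := by exact_mod_cast hB2
      have key : ((ℓ i : ℝ) + 2) / q ≤ 1 := by
        rw [div_le_one hq0]; linarith
      have hsum : 1 / (q : ℝ) + ((ℓ i : ℝ) + 1) / q = ((ℓ i : ℝ) + 2) / q := by ring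
      linarith [hy2 i hiT]
    rw [Finset.mem_filter]
    refine ⟨hiT, ?_⟩
    rw [Int.fract_eq_self.mpr ⟨by linarith, h2⟩]
    linarith
  -- cardinalities of the integer sets
  have cardA : ((Finset.range q).filter (fun j => 2 * j + 4 ≤ q)).card = (q - 2) / 2 := by
    have : (Finset.range q).filter (fun j => 2 * j + 4 ≤ q) = Finset.range ((q - 2) / 2) := by
      ext j
      simp only [Finset.mem_filter, Finset.mem_range]
      omega
    rw [this, Finset.card_range]
  have cardB : ((Finset.range q).filter (fun j => q ≤ 2 * j ∧ j + 2 ≤ q)).card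
      = (q - 1) - (q + 1) / 2 := by
    have : (Finset.range q).filter (fun j => q ≤ 2 * j ∧ j + 2 ≤ q)
        = Finset.Ico ((q + 1) / 2) (q - 1) := by
      ext j
      simp only [Finset.mem_filter, Finset.mem_range, Finset.mem_Ico]
      omega
    rw [this, Nat.card_Ico]
  have hlow : (q - 2) / 2 ≤ (T.filter (fun i => Int.fract (y i) < 1 / 2)).card := by
    calc (q - 2) / 2 = (T.filter (fun i => 2 * ℓ i + 4 ≤ q)).card := by
          rw [key_card (fun j => 2 * j + 4 ≤ q) inferInstance, cardA]
      _ ≤ _ := Finset.card_le_card hsubA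
  have hsum := Finset.card_filter_add_card_filter_not
    (s := T) (p := fun i => Int.fract (y i) < 1 / 2)
  have hhigh : (q - 1) - (q + 1) / 2 ≤
      (T.filter (fun i => ¬ Int.fract (y i) < 1 / 2)).card := by
    calc (q - 1) - (q + 1) / 2
        = (T.filter (fun i => q ≤ 2 * ℓ i ∧ ℓ i + 2 ≤ q)).card := by
          rw [key_card (fun j => q ≤ 2 * j ∧ j + 2 ≤ q) inferInstance, cardB]
      _ ≤ _ := Finset.card_le_card hsubB
  rw [hT] at hsum
  omega

lemma of_not_terminatedAt (α : ℝ) (hα : Irrational α) (m : ℕ) :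
    ¬ (GenContFract.of α).TerminatedAt m := by
  intro hm
  have hterm : (GenContFract.of α).Terminates := ⟨m, hm⟩
  obtain ⟨r, hr⟩ := (GenContFract.terminates_iff_rat α).mp hterm
  exact hα ⟨r, hr.symm⟩

lemma conts_int (α : ℝ) (hα : Irrational α) :
    ∀ m, ∃ a b : ℤ, ((GenContFract.of α).contsAux m).a = (a : ℝ) ∧
      ((GenContFract.of α).contsAux m).b = (b : ℝ) := by
  intro m
  induction m using Nat.twoStepInduction with
  | zero => exact ⟨1, 0, by rw [GenContFract.zeroth_contAux_eq_one_zero]; norm_num, by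
      rw [GenContFract.zeroth_contAux_eq_one_zero]; norm_num⟩
  | one => exact ⟨⌊α⌋, 1, by
      rw [GenContFract.first_contAux_eq_h_one, GenContFract.of_h_eq_floor], by
      rw [GenContFract.first_contAux_eq_h_one]; norm_num⟩
  | more m IH2 IH1 =>
    obtain ⟨gp, s_eq⟩ : ∃ gp, (GenContFract.of α).s.get? m = some gp :=
      Option.ne_none_iff_exists'.mp (of_not_terminatedAt α hα m)
    have ha1 : gp.a = 1 :=
      (GenContFract.of_partNum_eq_one_and_exists_int_partDen_eq s_eq).1
    obtain ⟨z, hz⟩ := (GenContFract.of_partNum_eq_one_and_exists_int_partDen_eq s_eq).2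
    obtain ⟨a0, b0, ha0, hb0⟩ := IH2
    obtain ⟨a1, b1, ha1', hb1'⟩ := IH1
    have hrec := GenContFract.contsAux_recurrence s_eq rfl rfl
    refine ⟨z * a1 + a0, z * b1 + b0, ?_, ?_⟩
    · rw [hrec]; dsimp; rw [ha1, hz, ha0, ha1']; push_cast; ring
    · rw [hrec]; dsimp; rw [ha1, hz, hb0, hb1']; push_cast; ring

lemma dens_int (α : ℝ) (hα : Irrational α) (m : ℕ) :
    ∃ b : ℤ, (GenContFract.of α).dens m = (b : ℝ) := by
  obtain ⟨a, b, _, hb⟩ := conts_int α hα (m + 1)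
  exact ⟨b, by rw [GenContFract.den_eq_conts_b, GenContFract.nth_cont_eq_succ_nth_contAux, hb]⟩

lemma nums_int (α : ℝ) (hα : Irrational α) (m : ℕ) :
    ∃ a : ℤ, (GenContFract.of α).nums m = (a : ℝ) := by
  obtain ⟨a, b, ha, _⟩ := conts_int α hα (m + 1)
  exact ⟨a, by rw [GenContFract.num_eq_conts_a, GenContFract.nth_cont_eq_succ_nth_contAux, ha]⟩

lemma one_le_dens (α : ℝ) (m : ℕ) : (1 : ℝ) ≤ (GenContFract.of α).dens m := by
  induction m with
  | zero => rw [GenContFract.zeroth_den_eq_one]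
  | succ m IH => exact le_trans IH GenContFract.of_den_mono

/-- Number-theoretic facts from continued fractions: the denominator is positive and there is a
coprime numerator giving approximation to within `1/q²`. -/
lemma cf_facts (α : ℝ) (hα : Irrational α) (n : ℕ) (qn : ℕ)
    (hqn : (qn : ℝ) = (GenContFract.of α).dens n) :
    1 ≤ qn ∧ ∃ p : ℤ, Int.gcd p qn = 1 ∧ |α - p / qn| ≤ 1 / (qn : ℝ) ^ 2 := by
  have hq1 : (1 : ℝ) ≤ (qn : ℝ) := by rw [hqn]; exact one_le_dens α n
  have hqnat : 1 ≤ qn := by exact_mod_cast hq1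
  obtain ⟨p, hp⟩ := nums_int α hα n
  obtain ⟨a', ha'⟩ := nums_int α hα (n + 1)
  obtain ⟨b', hb'⟩ := dens_int α hα (n + 1)
  -- determinant formula
  have hdet := SimpContFract.determinant (s := SimpContFract.of α) (n := n)
    (of_not_terminatedAt α hα n)
  have hcoe : ((SimpContFract.of α : SimpContFract ℝ) : GenContFract ℝ) = GenContFract.of α := rfl
  rw [hcoe] at hdet
  rw [hp, hb', ← hqn, ha'] at hdet
  have hdetZ : p * b' - (qn : ℤ) * a' = (-1) ^ (n + 1) := by
    have : ((p * b' - (qn : ℤ) * a' : ℤ) : ℝ) = (((-1 : ℤ) ^ (n + 1) : ℤ) : ℝ) := by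
      push_cast
      convert hdet using 2
    exact_mod_cast this
  have hcop : Int.gcd p qn = 1 := by
    rw [← Int.isCoprime_iff_gcd_eq_one]
    rcases neg_one_pow_eq_or ℤ (n + 1) with h | h
    · exact ⟨b', -a', by rw [h] at hdetZ; linarith [hdetZ]⟩
    · exact ⟨-b', a', by rw [h] at hdetZ; linarith [hdetZ]⟩
  refine ⟨hqnat, p, hcop, ?_⟩
  have habs := GenContFract.abs_sub_convs_le (v := α) (n := n) (of_not_terminatedAt α hα n)
  rw [GenContFract.conv_eq_num_div_den, hp, ← hqn] at habs
  refine le_trans habs ?_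
  have hd1 : (qn : ℝ) ≤ (GenContFract.of α).dens (n + 1) := by
    rw [hqn]; exact GenContFract.of_den_mono
  have hpos : (0 : ℝ) < (qn : ℝ) * (GenContFract.of α).dens (n + 1) := by
    apply mul_pos (by linarith) (by linarith [one_le_dens α (n + 1)])
  rw [div_le_div_iff₀ hpos (by positivity), one_mul, one_mul, pow_two]
  apply mul_le_mul_of_nonneg_left hd1 (by linarith)

/-- The Denjoy–Koksma-type bound: `|ω(θ, q)| ≤ 4` for a coprime good approximation `p/q`. -/
lemma walk_bound (α θ : ℝ) (q : ℕ) (hq : 1 ≤ q) (p : ℤ)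
    (hcop : Int.gcd p q = 1) (happ : |α - p / q| ≤ 1 / (q : ℝ) ^ 2) :
    -4 ≤ walk α θ q ∧ walk α θ q ≤ 4 := by
  have hq0 : (0 : ℝ) < q := by exact_mod_cast hq
  obtain ⟨δ, hδdef⟩ : ∃ x : ℝ, x = α - p / q := ⟨_, rfl⟩
  rw [← hδdef] at happ
  obtain ⟨ε, hεdef⟩ : ∃ e : ℕ, e = if 0 ≤ δ then 0 else 1 := ⟨_, rfl⟩
  obtain ⟨c, hcdef⟩ : ∃ c : ℤ, c = ⌊(q : ℝ) * θ⌋ - ε := ⟨_, rfl⟩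
  obtain ⟨ℓ, hℓdef⟩ : ∃ f : ℕ → ℕ, f = fun i : ℕ => (((i : ℤ) * p + c) % q).toNat := ⟨_, rfl⟩
  obtain ⟨φ, hφdef⟩ : ∃ x : ℝ, x = Int.fract ((q : ℝ) * θ) / q := ⟨_, rfl⟩
  obtain ⟨y, hydef⟩ : ∃ g : ℕ → ℝ,
    g = fun i : ℕ => φ + ((ℓ i : ℝ) + ε) / q + i * δ := ⟨_, rfl⟩
  have hφ0 : 0 ≤ φ := by
    rw [hφdef]; exact div_nonneg (Int.fract_nonneg _) hq0.le
  have hφ1 : φ < 1 / q := by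
    rw [hφdef, div_lt_div_iff₀ hq0 hq0]
    nlinarith [Int.fract_lt_one ((q : ℝ) * θ)]
  have hqZ : ((q : ℤ)) ≠ 0 := by exact_mod_cast Nat.one_le_iff_ne_zero.mp hq
  have hqZ0 : (0 : ℤ) < (q : ℤ) := by exact_mod_cast hq
  -- the perturbation is always in [0, 1/q]
  have hεbound : ∀ i ∈ Finset.Icc 1 q,
      0 ≤ (ε : ℝ) / q + i * δ ∧ (ε : ℝ) / q + i * δ ≤ 1 / q := by
    intro i hi
    obtain ⟨hi1, hiq⟩ := Finset.mem_Icc.mp hi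
    have hiR : (i : ℝ) ≤ q := by exact_mod_cast hiq
    have hiR0 : (0 : ℝ) ≤ i := by positivity
    have hqq : (q : ℝ) * (1 / (q : ℝ) ^ 2) = 1 / q := by
      field_simp
    by_cases hδ : 0 ≤ δ
    · have hε0 : ε = 0 := hεdef.trans (if_pos hδ)
      have hδ2 : δ ≤ 1 / (q : ℝ) ^ 2 := le_trans (le_abs_self δ) happ
      rw [hε0]
      simp only [Nat.cast_zero, zero_div, zero_add]
      constructor
      · positivity
      · have h1 : (i : ℝ) * δ ≤ (q : ℝ) * δ := mul_le_mul_of_nonneg_right hiR hδ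
        have h2 : (q : ℝ) * δ ≤ (q : ℝ) * (1 / (q : ℝ) ^ 2) :=
          mul_le_mul_of_nonneg_left hδ2 hq0.le
        rw [hqq] at h2
        linarith
    · push_neg at hδ
      have hε1 : ε = 1 := hεdef.trans (if_neg (not_le.mpr hδ))
      have hδ2 : -δ ≤ 1 / (q : ℝ) ^ 2 := le_trans (neg_le_abs δ) happ
      rw [hε1]
      simp only [Nat.cast_one]
      constructor
      · have h1 : (i : ℝ) * (-δ) ≤ (q : ℝ) * (-δ) :=
          mul_le_mul_of_nonneg_right hiR (by linarith)
        have h2 : (q : ℝ) * (-δ) ≤ (q : ℝ) * (1 / (q : ℝ) ^ 2) :=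
          mul_le_mul_of_nonneg_left hδ2 hq0.le
        rw [hqq] at h2
        nlinarith
      · have h1 : (i : ℝ) * δ ≤ 0 := mul_nonpos_of_nonneg_of_nonpos hiR0 hδ.le
        linarith
  have hlt : ∀ i ∈ Finset.Icc 1 q, ℓ i < q := by
    intro i _
    have h1 : 0 ≤ ((i : ℤ) * p + c) % q := Int.emod_nonneg _ hqZ
    have h2 : ((i : ℤ) * p + c) % q < q := Int.emod_lt_of_pos _ hqZ0
    simp only [hℓdef]
    omega
  have hinj : Set.InjOn ℓ (Finset.Icc 1 q) := by
    intro i1 h1 i2 h2 heq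
    rw [Finset.mem_coe, Finset.mem_Icc] at h1 h2
    simp only [hℓdef] at heq
    have e1 : ((i1 : ℤ) * p + c) % q = ((i2 : ℤ) * p + c) % q := by
      have n1 : 0 ≤ ((i1 : ℤ) * p + c) % q := Int.emod_nonneg _ hqZ
      have n2 : 0 ≤ ((i2 : ℤ) * p + c) % q := Int.emod_nonneg _ hqZ
      omega
    have hd : (q : ℤ) ∣ ((i2 : ℤ) * p + c) - ((i1 : ℤ) * p + c) := Int.ModEq.dvd e1
    have hd' : (q : ℤ) ∣ ((i2 : ℤ) - i1) * p := by
      have : ((i2 : ℤ) * p + c) - ((i1 : ℤ) * p + c) = ((i2 : ℤ) - i1) * p := by ring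
      rwa [this] at hd
    have hco : IsCoprime ((q : ℤ)) p := by
      rw [Int.isCoprime_iff_gcd_eq_one, Int.gcd_comm]; exact hcop
    have hq2 : (q : ℤ) ∣ (i2 : ℤ) - i1 := hco.dvd_of_dvd_mul_right hd'
    have hb : |(i2 : ℤ) - i1| < q := by rw [abs_lt]; omega
    have h0 : (i2 : ℤ) - i1 = 0 := Int.eq_zero_of_abs_lt_dvd hq2 hb
    omega
  have hy1 : ∀ i ∈ Finset.Icc 1 q, φ + ℓ i / q ≤ y i := by
    intro i hi
    have h := (hεbound i hi).1
    have hsplit : ((ℓ i : ℝ) + ε) / q = (ℓ i : ℝ) / q + (ε : ℝ) / q := by ring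
    simp only [hydef, hsplit]
    linarith
  have hy2 : ∀ i ∈ Finset.Icc 1 q, y i ≤ φ + (ℓ i + 1) / q := by
    intro i hi
    have h := (hεbound i hi).2
    have hsplit : ((ℓ i : ℝ) + ε) / q = (ℓ i : ℝ) / q + (ε : ℝ) / q := by ring
    have hsplit2 : ((ℓ i : ℝ) + 1) / q = (ℓ i : ℝ) / q + 1 / q := by ring
    simp only [hydef, hsplit, hsplit2]
    linarith
  have hfr : ∀ i ∈ Finset.Icc 1 q, Int.fract (y i) = Int.fract (θ + i * α) := by
    intro i _
    set k : ℤ := ((i : ℤ) * p + c) / q with hkdef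
    have hmod : ((ℓ i : ℤ)) = (i : ℤ) * p + c - q * k := by
      simp only [hℓdef]
      rw [Int.toNat_of_nonneg (Int.emod_nonneg _ hqZ), hkdef, Int.emod_def]
    have hℓR : ((ℓ i : ℝ)) = (i : ℝ) * p + (c : ℝ) - q * k := by exact_mod_cast hmod
    have hcR : (c : ℝ) = (⌊(q : ℝ) * θ⌋ : ℝ) - ε := by rw [hcdef]; push_cast; ring
    have hθq : Int.fract (θ * (q : ℝ)) = θ * q - (⌊θ * (q : ℝ)⌋ : ℝ) :=
      (Int.self_sub_floor _).symm
    have hcomm : (⌊(q : ℝ) * θ⌋ : ℤ) = ⌊θ * (q : ℝ)⌋ := by rw [mul_comm]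
    have hkey : θ + i * α = y i + k := by
      have hq' : (q : ℝ) ≠ 0 := ne_of_gt hq0
      simp only [hydef, hφdef, hδdef]
      rw [hℓR, hcR]
      field_simp
      ring_nf
      ring_nf at hθq
      linarith [hθq]
    rw [hkey, Int.fract_add_intCast]
  have hcard : (Finset.Icc 1 q).card = q := by rw [Nat.card_Icc]; omega
  have hc := core_count q hq φ hφ0 hφ1 (Finset.Icc 1 q) hcard ℓ hinj hlt y hy1 hy2
  have hfilter : (Finset.Icc 1 q).filter (fun i => Int.fract (y i) < 1 / 2)
      = (Finset.Icc 1 q).filter (fun i : ℕ => Int.fract (θ + i * α) < 1 / 2) :=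
    Finset.filter_congr (fun i hi => by rw [hfr i hi])
  rw [hfilter] at hc
  rw [walk_eq_card]
  omega

/-- If `ω(0, q_n) = 1` then `ω(θ, q_n) ∈ {1, -1, 3, -3}` for every `θ ∈ [0,1)`. -/
theorem walk_translation_odd_case (α : ℝ) (hα : Irrational α)
    (hα01 : α ∈ Set.Ioo (0 : ℝ) 1) (n : ℕ) (qn : ℕ)
    (hqn : (qn : ℝ) = (GenContFract.of α).dens n)
    (h1 : walk α 0 qn = 1) (θ : ℝ) (hθ : θ ∈ Set.Ico (0 : ℝ) 1) :
    walk α θ qn = 1 ∨ walk α θ qn = -1 ∨ walk α θ qn = 3 ∨ walk α θ qn = -3 := by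
  obtain ⟨hq1, p, hcop, happ⟩ := cf_facts α hα n qn hqn
  obtain ⟨hlow, hhigh⟩ := walk_bound α θ qn hq1 p hcop happ
  have hpar : ∀ ϑ : ℝ, (2 : ℤ) ∣ walk α ϑ qn - qn := by
    intro ϑ
    rw [walk_eq_card]
    exact ⟨(((Finset.Icc 1 qn).filter
      (fun i : ℕ => Int.fract (ϑ + i * α) < 1 / 2)).card : ℤ) - qn, by ring⟩
  have h2 := hpar 0
  rw [h1] at h2
  have h3 := hpar θ
  omega
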